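/- Let H₁ be a connected simple graph containing a vertex v with d(v) ≥ 3, a pendant vertex v₁ whose unique neighbor is v, and an edge u₁u₂ lying on a cycle of H₁ with u₁, u₂ ∉ {v, v₁}. Let H₂ = H₁ − {u₁u₂, vv₁} + {u₁v₁, u₂v₁} (delete the edges u₁u₂ and vv₁ and add the edges u₁v₁ and u₂v₁). Then M₂(H₂) < M₂(H₁). -/

import Mathlib

open scoped Classical in
/-- The second Zagreb index: the sum over all edges of the product of the
degrees of the two endpoints. -/
noncomputable def zagrebM2 {V : Type*} [Fintype V] (G : SimpleGraph V) : ℕ :=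
  ∑ e ∈ G.edgeFinset,
    Sym2.lift ⟨fun x y => G.degree x * G.degree y, fun _ _ => Nat.mul_comm _ _⟩ e

open SimpleGraph in
private lemma exists_ne_adj_of_cycle_edge' {V : Type*} {G : SimpleGraph V} {u₁ u₂ : V}
    (hcyc : ∃ (x : V) (c : G.Walk x x), c.IsCycle ∧ s(u₁, u₂) ∈ c.edges) :
    G.Adj u₁ u₂ ∧ ∃ x, G.Adj u₁ x ∧ x ≠ u₂ := by
  classical
  rw [← adj_and_reachable_delete_edges_iff_exists_cycle] at hcyc
  obtain ⟨hadj, hreach⟩ := hcyc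
  obtain ⟨p⟩ := hreach
  have hnn : ¬ p.Nil := SimpleGraph.Walk.not_nil_of_ne hadj.ne
  have hx := p.adj_snd hnn
  rw [SimpleGraph.deleteEdges_adj] at hx
  obtain ⟨hx1, hx2⟩ := hx
  refine ⟨hadj, p.getVert 1, hx1, ?_⟩
  intro heq
  exact hx2 (by simp [SimpleGraph.fromEdgeSet_adj, hx1.ne, heq, hadj.ne])

open scoped Classical in
/-- Operation I: if `H₁` is connected, `v` has degree at least 3, `v₁` is a pendant
vertex whose unique neighbor is `v`, and `u₁u₂` is an edge lying on a cycle of `H₁`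
with `u₁, u₂ ∉ {v, v₁}`, then the graph
`H₂ = H₁ - {u₁u₂, vv₁} + {u₁v₁, u₂v₁}` satisfies `M₂(H₂) < M₂(H₁)`. -/
theorem M2_operationI_lt {V : Type*} [Fintype V] (H₁ : SimpleGraph V)
    (hconn : H₁.Connected) (v v₁ u₁ u₂ : V)
    (hdeg : 3 ≤ H₁.degree v)
    (hpend : H₁.degree v₁ = 1) (hadj : H₁.Adj v v₁)
    (hcyc : ∃ (x : V) (c : H₁.Walk x x), c.IsCycle ∧ s(u₁, u₂) ∈ c.edges)
    (hu₁v : u₁ ≠ v) (hu₁v₁ : u₁ ≠ v₁) (hu₂v : u₂ ≠ v) (hu₂v₁ : u₂ ≠ v₁)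
    (H₂ : SimpleGraph V)
    (hH₂ : H₂ = SimpleGraph.fromEdgeSet
      ((H₁.edgeSet \ {s(u₁, u₂), s(v, v₁)}) ∪ {s(u₁, v₁), s(u₂, v₁)})) :
    zagrebM2 H₂ < zagrebM2 H₁ := by
  -- basic facts
  have hvv₁ : v ≠ v₁ := hadj.ne
  obtain ⟨hadj12, x₁, hx₁, hx₁u₂⟩ := exists_ne_adj_of_cycle_edge' hcyc
  have hcyc' : ∃ (x : V) (c : H₁.Walk x x), c.IsCycle ∧ s(u₂, u₁) ∈ c.edges := by
    obtain ⟨x, c, hc, he⟩ := hcyc; exact ⟨x, c, hc, by rwa [Sym2.eq_swap]⟩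
  obtain ⟨hadj21, x₂, hx₂, hx₂u₁⟩ := exists_ne_adj_of_cycle_edge' hcyc'
  have hu12 : u₁ ≠ u₂ := hadj12.ne
  -- the unique neighbor of v₁ is v
  have hN₁v₁ : ∀ y, H₁.Adj v₁ y ↔ y = v := by
    intro y
    constructor
    · intro hy
      by_contra hne
      have hsub : {y, v} ⊆ H₁.neighborFinset v₁ := by
        intro z hz
        simp only [Finset.mem_insert, Finset.mem_singleton] at hz
        rcases hz with rfl | rfl
        · exact (SimpleGraph.mem_neighborFinset _ _ _).2 hy
        · exact (SimpleGraph.mem_neighborFinset _ _ _).2 hadj.symm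
      have := Finset.card_le_card hsub
      rw [Finset.card_pair hne, SimpleGraph.card_neighborFinset_eq_degree, hpend] at this
      omega
    · rintro rfl; exact hadj.symm
  -- degrees of u₁, u₂ in H₁ are at least 2
  have hdu₁2 : 2 ≤ H₁.degree u₁ := by
    have hsub : {u₂, x₁} ⊆ H₁.neighborFinset u₁ := by
      intro z hz
      simp only [Finset.mem_insert, Finset.mem_singleton] at hz
      rcases hz with rfl | rfl
      · exact (SimpleGraph.mem_neighborFinset _ _ _).2 hadj12
      · exact (SimpleGraph.mem_neighborFinset _ _ _).2 hx₁
    have := Finset.card_le_card hsub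
    rwa [Finset.card_pair (Ne.symm hx₁u₂), SimpleGraph.card_neighborFinset_eq_degree] at this
  have hdu₂2 : 2 ≤ H₁.degree u₂ := by
    have hsub : {u₁, x₂} ⊆ H₁.neighborFinset u₂ := by
      intro z hz
      simp only [Finset.mem_insert, Finset.mem_singleton] at hz
      rcases hz with rfl | rfl
      · exact (SimpleGraph.mem_neighborFinset _ _ _).2 hadj21
      · exact (SimpleGraph.mem_neighborFinset _ _ _).2 hx₂
    have := Finset.card_le_card hsub
    rwa [Finset.card_pair (Ne.symm hx₂u₁), SimpleGraph.card_neighborFinset_eq_degree] at this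
  -- adjacency in H₂
  have hA : ∀ a b : V, H₂.Adj a b ↔
      ((H₁.Adj a b ∧ s(a, b) ≠ s(u₁, u₂) ∧ s(a, b) ≠ s(v, v₁)) ∨
        s(a, b) = s(u₁, v₁) ∨ s(a, b) = s(u₂, v₁)) := by
    subst hH₂
    intro a b
    rw [SimpleGraph.fromEdgeSet_adj]
    simp only [Set.mem_union, Set.mem_diff, Set.mem_insert_iff, Set.mem_singleton_iff,
      SimpleGraph.mem_edgeSet]
    constructor
    · rintro ⟨(⟨h1, h2⟩ | h1), _⟩
      · exact Or.inl ⟨h1, by tauto⟩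
      · exact Or.inr h1
    · rintro (⟨h1, h2, h3⟩ | h1 | h1)
      · exact ⟨Or.inl ⟨h1, by tauto⟩, h1.ne⟩
      · refine ⟨Or.inr (Or.inl h1), ?_⟩
        intro hab
        rw [hab, Sym2.eq_iff] at h1
        rcases h1 with ⟨h, h'⟩ | ⟨h, h'⟩ <;> exact hu₁v₁ (h ▸ h'.symm ▸ rfl)
      · refine ⟨Or.inr (Or.inr h1), ?_⟩
        intro hab
        rw [hab, Sym2.eq_iff] at h1
        rcases h1 with ⟨h, h'⟩ | ⟨h, h'⟩ <;> exact hu₂v₁ (h ▸ h'.symm ▸ rfl)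
  have hnadj₁ : ¬ H₁.Adj u₁ v₁ := fun h => hu₁v ((hN₁v₁ u₁).1 h.symm)
  have hnadj₂ : ¬ H₁.Adj u₂ v₁ := fun h => hu₂v ((hN₁v₁ u₂).1 h.symm)
  -- degree of v₁ in H₂ is 2
  have hNv₁ : H₂.neighborFinset v₁ = {u₁, u₂} := by
    ext y
    have hy := hN₁v₁ y
    simp only [SimpleGraph.mem_neighborFinset, hA, ne_eq, Sym2.eq_iff, Finset.mem_insert,
      Finset.mem_singleton]
    constructor
    · rintro (⟨h1, -, h3⟩ | h | h)
      · exact absurd (Or.inr ⟨by trivial, hy.1 h1⟩) h3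
      · rcases h with ⟨h, -⟩ | ⟨-, rfl⟩
        · exact absurd h.symm hu₁v₁
        · exact Or.inl rfl
      · rcases h with ⟨h, -⟩ | ⟨-, rfl⟩
        · exact absurd h.symm hu₂v₁
        · exact Or.inr rfl
    · rintro (rfl | rfl)
      · exact Or.inr (Or.inl (Or.inr ⟨by trivial, by trivial⟩))
      · exact Or.inr (Or.inr (Or.inr ⟨by trivial, by trivial⟩))
  have hd2v₁ : H₂.degree v₁ = 2 := by
    rw [← SimpleGraph.card_neighborFinset_eq_degree, hNv₁, Finset.card_pair hu12]
  -- degree of v in H₂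
  have hNv : H₂.neighborFinset v = (H₁.neighborFinset v).erase v₁ := by
    ext y
    simp only [SimpleGraph.mem_neighborFinset, hA, ne_eq, Sym2.eq_iff, Finset.mem_erase]
    constructor
    · rintro (⟨h1, -, h3⟩ | h | h)
      · exact ⟨fun hy => h3 (Or.inl ⟨by trivial, hy⟩), h1⟩
      · rcases h with ⟨h, -⟩ | ⟨h, -⟩
        · exact absurd h.symm hu₁v
        · exact absurd h hvv₁
      · rcases h with ⟨h, -⟩ | ⟨h, -⟩
        · exact absurd h.symm hu₂v
        · exact absurd h hvv₁
    · rintro ⟨hne, h1⟩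
      refine Or.inl ⟨h1, ?_, ?_⟩
      · rintro (⟨h, -⟩ | ⟨h, -⟩)
        · exact hu₁v h.symm
        · exact hu₂v h.symm
      · rintro (⟨-, h⟩ | ⟨h, -⟩)
        · exact hne h
        · exact hvv₁ h
  have hd2v : H₂.degree v = H₁.degree v - 1 := by
    rw [← SimpleGraph.card_neighborFinset_eq_degree, hNv, Finset.card_erase_of_mem
      ((SimpleGraph.mem_neighborFinset _ _ _).2 hadj),
      SimpleGraph.card_neighborFinset_eq_degree]
  -- degree of u₁ unchanged
  have hNu₁ : H₂.neighborFinset u₁ = insert v₁ ((H₁.neighborFinset u₁).erase u₂) := by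
    ext y
    simp only [SimpleGraph.mem_neighborFinset, hA, ne_eq, Sym2.eq_iff, Finset.mem_insert,
      Finset.mem_erase]
    constructor
    · rintro (⟨h1, h2, -⟩ | h | h)
      · exact Or.inr ⟨fun hy => h2 (Or.inl ⟨by trivial, hy⟩), h1⟩
      · rcases h with ⟨-, rfl⟩ | ⟨h, -⟩
        · exact Or.inl rfl
        · exact absurd h hu₁v₁
      · rcases h with ⟨h, -⟩ | ⟨h, -⟩
        · exact absurd h hu12
        · exact absurd h hu₁v₁
    · rintro (rfl | ⟨hne, h1⟩)
      · exact Or.inr (Or.inl (Or.inl ⟨by trivial, by trivial⟩))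
      · refine Or.inl ⟨h1, ?_, ?_⟩
        · rintro (⟨-, h⟩ | ⟨h, -⟩)
          · exact hne h
          · exact hu12 h
        · rintro (⟨h, -⟩ | ⟨h, -⟩)
          · exact hu₁v h
          · exact hu₁v₁ h
  have hd2u₁ : H₂.degree u₁ = H₁.degree u₁ := by
    rw [← SimpleGraph.card_neighborFinset_eq_degree, hNu₁, Finset.card_insert_of_notMem
      (by simp only [Finset.mem_erase, SimpleGraph.mem_neighborFinset]
          rintro ⟨-, h⟩; exact hnadj₁ h),
      Finset.card_erase_of_mem ((SimpleGraph.mem_neighborFinset _ _ _).2 hadj12),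
      SimpleGraph.card_neighborFinset_eq_degree]
    omega
  -- degree of u₂ unchanged
  have hNu₂ : H₂.neighborFinset u₂ = insert v₁ ((H₁.neighborFinset u₂).erase u₁) := by
    ext y
    simp only [SimpleGraph.mem_neighborFinset, hA, ne_eq, Sym2.eq_iff, Finset.mem_insert,
      Finset.mem_erase]
    constructor
    · rintro (⟨h1, h2, -⟩ | h | h)
      · exact Or.inr ⟨fun hy => h2 (Or.inr ⟨by trivial, hy⟩), h1⟩
      · rcases h with ⟨h, -⟩ | ⟨h, -⟩
        · exact absurd h.symm hu12
        · exact absurd h hu₂v₁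
      · rcases h with ⟨-, rfl⟩ | ⟨h, -⟩
        · exact Or.inl rfl
        · exact absurd h hu₂v₁
    · rintro (rfl | ⟨hne, h1⟩)
      · exact Or.inr (Or.inr (Or.inl ⟨by trivial, by trivial⟩))
      · refine Or.inl ⟨h1, ?_, ?_⟩
        · rintro (⟨h, -⟩ | ⟨-, h⟩)
          · exact hu12 h.symm
          · exact hne h
        · rintro (⟨h, -⟩ | ⟨h, -⟩)
          · exact hu₂v h
          · exact hu₂v₁ h
  have hd2u₂ : H₂.degree u₂ = H₁.degree u₂ := by
    rw [← SimpleGraph.card_neighborFinset_eq_degree, hNu₂, Finset.card_insert_of_notMem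
      (by simp only [Finset.mem_erase, SimpleGraph.mem_neighborFinset]
          rintro ⟨-, h⟩; exact hnadj₂ h),
      Finset.card_erase_of_mem ((SimpleGraph.mem_neighborFinset _ _ _).2 hadj12.symm),
      SimpleGraph.card_neighborFinset_eq_degree]
    omega
  -- other degrees unchanged
  have hdoth : ∀ x : V, x ≠ v → x ≠ v₁ → x ≠ u₁ → x ≠ u₂ → H₂.degree x = H₁.degree x := by
    intro x h1 h2 h3 h4
    have hNx : H₂.neighborFinset x = H₁.neighborFinset x := by
      ext y
      simp only [SimpleGraph.mem_neighborFinset, hA, ne_eq, Sym2.eq_iff]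
      constructor
      · rintro (⟨h, -, -⟩ | h | h)
        · exact h
        · rcases h with ⟨h, -⟩ | ⟨h, -⟩
          · exact absurd h h3
          · exact absurd h h2
        · rcases h with ⟨h, -⟩ | ⟨h, -⟩
          · exact absurd h h4
          · exact absurd h h2
      · intro h
        refine Or.inl ⟨h, ?_, ?_⟩
        · rintro (⟨h', -⟩ | ⟨h', -⟩)
          · exact h3 h'
          · exact h4 h'
        · rintro (⟨h', -⟩ | ⟨h', -⟩)
          · exact h1 h'
          · exact h2 h'
    rw [← SimpleGraph.card_neighborFinset_eq_degree, hNx,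
      SimpleGraph.card_neighborFinset_eq_degree]
  have hdeq : ∀ x : V, x ≠ v → x ≠ v₁ → H₂.degree x = H₁.degree x := by
    intro x h1 h2
    by_cases h3 : x = u₁
    · subst h3; exact hd2u₁
    by_cases h4 : x = u₂
    · subst h4; exact hd2u₂
    exact hdoth x h1 h2 h3 h4
  set φ₁ : Sym2 V → ℕ :=
    fun e => Sym2.lift ⟨fun x y => H₁.degree x * H₁.degree y, fun _ _ => Nat.mul_comm _ _⟩ e
    with hφ₁
  set φ₂ : Sym2 V → ℕ :=
    fun e => Sym2.lift ⟨fun x y => H₂.degree x * H₂.degree y, fun _ _ => Nat.mul_comm _ _⟩ e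
    with hφ₂
  have hφ₁mk : ∀ a b : V, φ₁ s(a, b) = H₁.degree a * H₁.degree b := fun a b => rfl
  have hφ₂mk : ∀ a b : V, φ₂ s(a, b) = H₂.degree a * H₂.degree b := fun a b => rfl
  set E₀ : Finset (Sym2 V) := H₁.edgeFinset \ {s(u₁, u₂), s(v, v₁)} with hE₀
  -- edge finset of H₂
  have hE₂ : H₂.edgeFinset = E₀ ∪ {s(u₁, v₁), s(u₂, v₁)} := by
    ext e
    refine Sym2.ind (fun a b => ?_) e
    simp only [hE₀, Finset.mem_union, Finset.mem_sdiff, Finset.mem_insert, Finset.mem_singleton,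
      SimpleGraph.mem_edgeFinset, SimpleGraph.mem_edgeSet, hA a b]
    tauto
  -- endpoints of edges in E₀ are distinct from v₁
  have hE₀v₁ : ∀ a b : V, s(a, b) ∈ E₀ → a ≠ v₁ := by
    intro a b hab
    simp only [hE₀, Finset.mem_sdiff, Finset.mem_insert, Finset.mem_singleton,
      SimpleGraph.mem_edgeFinset, SimpleGraph.mem_edgeSet] at hab
    obtain ⟨h1, h3⟩ := hab
    rintro rfl
    have := (hN₁v₁ b).1 h1
    subst this
    exact h3 (Or.inr Sym2.eq_swap)
  -- pointwise inequality on E₀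
  have hdle : ∀ x : V, x ≠ v₁ → H₂.degree x ≤ H₁.degree x := by
    intro x hx
    by_cases hxv : x = v
    · subst hxv; omega
    · rw [hdeq x hxv hx]
  have hpt : ∀ e ∈ E₀, φ₂ e ≤ φ₁ e := by
    intro e he
    induction e using Sym2.ind with
    | _ a b =>
      have ha : a ≠ v₁ := hE₀v₁ a b he
      have hb : b ≠ v₁ := hE₀v₁ b a (by rwa [Sym2.eq_swap])
      rw [hφ₁mk, hφ₂mk]
      exact Nat.mul_le_mul (hdle a ha) (hdle b hb)
  -- two neighbors of v other than v₁
  obtain ⟨w₁, hw₁, w₂, hw₂, hw12⟩ : ∃ w₁ ∈ (H₁.neighborFinset v).erase v₁,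
      ∃ w₂ ∈ (H₁.neighborFinset v).erase v₁, w₁ ≠ w₂ := by
    apply Finset.one_lt_card.mp
    have := Finset.card_erase_of_mem ((SimpleGraph.mem_neighborFinset _ _ _).2 hadj)
    rw [this, SimpleGraph.card_neighborFinset_eq_degree]
    omega
  rw [Finset.mem_erase, SimpleGraph.mem_neighborFinset] at hw₁ hw₂
  obtain ⟨hw₁v₁, hw₁adj⟩ := hw₁
  obtain ⟨hw₂v₁, hw₂adj⟩ := hw₂
  -- the two special edges
  have he₁₂ : s(v, w₁) ≠ s(v, w₂) := by
    intro h
    rw [Sym2.eq_iff] at h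
    rcases h with ⟨-, h⟩ | ⟨h, -⟩
    · exact hw12 h
    · exact hw₂adj.ne' (h ▸ rfl)
  have hmemE₀ : ∀ w : V, w ≠ v₁ → H₁.Adj v w → s(v, w) ∈ E₀ := by
    intro w hwv₁ hwadj
    simp only [hE₀, Finset.mem_sdiff, Finset.mem_insert, Finset.mem_singleton,
      SimpleGraph.mem_edgeFinset, SimpleGraph.mem_edgeSet]
    refine ⟨hwadj, ?_⟩
    rintro (h | h) <;> rw [Sym2.eq_iff] at h
    · rcases h with ⟨h, -⟩ | ⟨h, -⟩
      · exact hu₁v h.symm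
      · exact hu₂v h.symm
    · rcases h with ⟨-, h⟩ | ⟨h, -⟩
      · exact hwv₁ h
      · exact hvv₁ h
  have he₁E₀ : s(v, w₁) ∈ E₀ := hmemE₀ w₁ hw₁v₁ hw₁adj
  have he₂E₀ : s(v, w₂) ∈ E₀ := hmemE₀ w₂ hw₂v₁ hw₂adj
  -- strict drop on the two special edges
  have hdrop : ∀ w : V, w ≠ v₁ → H₁.Adj v w → φ₂ s(v, w) + 1 ≤ φ₁ s(v, w) := by
    intro w hwv₁ hwadj
    rw [hφ₁mk, hφ₂mk, hd2v, hdeq w (fun h => hwadj.ne' h) hwv₁]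
    have hk : 1 ≤ H₁.degree w := by
      have : w ∈ H₁.neighborFinset v := (SimpleGraph.mem_neighborFinset _ _ _).2 hwadj
      have := SimpleGraph.degree_pos_iff_exists_adj H₁ w
      exact this.2 ⟨v, hwadj.symm⟩
    have h1 : (H₁.degree v - 1) * H₁.degree w = H₁.degree v * H₁.degree w - H₁.degree w :=
      Nat.sub_one_mul _ _
    have h2 : H₁.degree w ≤ H₁.degree v * H₁.degree w :=
      Nat.le_mul_of_pos_left _ (by omega)
    omega
  -- sum over E₀ comparison
  have hsum : (∑ e ∈ E₀, φ₂ e) + 2 ≤ ∑ e ∈ E₀, φ₁ e := by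
    have hsub : {s(v, w₁), s(v, w₂)} ⊆ E₀ := by
      intro z hz
      simp only [Finset.mem_insert, Finset.mem_singleton] at hz
      rcases hz with rfl | rfl
      · exact he₁E₀
      · exact he₂E₀
    rw [← Finset.sum_sdiff hsub (f := φ₂), ← Finset.sum_sdiff hsub (f := φ₁),
      Finset.sum_pair he₁₂, Finset.sum_pair he₁₂]
    have hrest : ∑ e ∈ E₀ \ {s(v, w₁), s(v, w₂)}, φ₂ e ≤ ∑ e ∈ E₀ \ {s(v, w₁), s(v, w₂)}, φ₁ e :=
      Finset.sum_le_sum (fun e he => hpt e (Finset.mem_sdiff.mp he).1)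
    have h1 := hdrop w₁ hw₁v₁ hw₁adj
    have h2 := hdrop w₂ hw₂v₁ hw₂adj
    omega
  -- decompose zagrebM2 H₁
  have hz₁ : zagrebM2 H₁ = (∑ e ∈ E₀, φ₁ e) + (φ₁ s(u₁, u₂) + φ₁ s(v, v₁)) := by
    have hsub : {s(u₁, u₂), s(v, v₁)} ⊆ H₁.edgeFinset := by
      intro z hz
      simp only [Finset.mem_insert, Finset.mem_singleton] at hz
      rcases hz with rfl | rfl <;>
        simp only [SimpleGraph.mem_edgeFinset, SimpleGraph.mem_edgeSet]
      · exact hadj12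
      · exact hadj
    have hne : s(u₁, u₂) ≠ s(v, v₁) := by
      intro h
      rw [Sym2.eq_iff] at h
      rcases h with ⟨h, -⟩ | ⟨h, -⟩
      · exact hu₁v h
      · exact hu₁v₁ h
    rw [zagrebM2, ← Finset.sum_sdiff hsub (f := φ₁), Finset.sum_pair hne]
  -- decompose zagrebM2 H₂
  have hz₂ : zagrebM2 H₂ = (∑ e ∈ E₀, φ₂ e) + (φ₂ s(u₁, v₁) + φ₂ s(u₂, v₁)) := by
    have hdisj : Disjoint E₀ ({s(u₁, v₁), s(u₂, v₁)} : Finset (Sym2 V)) := by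
      rw [Finset.disjoint_right]
      intro z hz hzE₀
      simp only [Finset.mem_insert, Finset.mem_singleton] at hz
      simp only [hE₀, Finset.mem_sdiff, SimpleGraph.mem_edgeFinset,
        SimpleGraph.mem_edgeSet] at hzE₀
      rcases hz with rfl | rfl
      · exact hnadj₁ hzE₀.1
      · exact hnadj₂ hzE₀.1
    have hne : s(u₁, v₁) ≠ s(u₂, v₁) := by
      intro h
      rw [Sym2.eq_iff] at h
      rcases h with ⟨h, -⟩ | ⟨-, h⟩
      · exact hu12 h
      · exact hu₂v₁ h.symm
    rw [zagrebM2, hE₂, Finset.sum_union hdisj, Finset.sum_pair hne]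
  -- final arithmetic
  rw [hz₁, hz₂, hφ₂mk, hφ₂mk, hφ₁mk, hφ₁mk, hd2v₁, hpend,
    hdeq u₁ hu₁v hu₁v₁, hdeq u₂ hu₂v hu₂v₁]
  obtain ⟨a, ha⟩ := Nat.exists_eq_add_of_le hdu₁2
  obtain ⟨b, hb⟩ := Nat.exists_eq_add_of_le hdu₂2
  rw [ha, hb]
  have : (2 + a) * (2 + b) = 4 + 2 * a + 2 * b + a * b := by ring
  omega
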